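/- For every real q>1, every n≥1, every m∈ℕ and every x∈(0,∞), the moments of the q-Szász operator satisfy M_{n,q}(t^{m+1};x) = (x/[n]_q)·D_q M_{n,q}(t^m;x) + x·M_{n,q}(t^m;x), where D_q acts on the variable x. -/

import Mathlib

open scoped BigOperators

/-- The `q`-integer `[k]_q = (q^k - 1)/(q - 1)`. -/
noncomputable def qNat (q : ℝ) (k : ℕ) : ℝ := (q ^ k - 1) / (q - 1)

/-- The `q`-factorial `[k]_q! = [1]_q [2]_q ⋯ [k]_q`, with `[0]_q! = 1`. -/
noncomputable def qFactorial (q : ℝ) : ℕ → ℝ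
  | 0 => 1
  | k + 1 => qFactorial q k * qNat q (k + 1)

/-- The `q`-exponential function `e_q(z) = ∑_{k=0}^∞ z^k/[k]_q!`. -/
noncomputable def qExp (q z : ℝ) : ℝ := ∑' k : ℕ, z ^ k / qFactorial q k

/-- The `q`-Szász basis function
`s_{n,k}(q;x) = q^{-k(k-1)/2} ([n]_q^k x^k/[k]_q!) e_q(-[n]_q q^{-k} x)`. -/
noncomputable def qSzaszBasis (q : ℝ) (n k : ℕ) (x : ℝ) : ℝ :=
  (q ^ (k * (k - 1) / 2))⁻¹ * (qNat q n ^ k * x ^ k / qFactorial q k) *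
    qExp q (-(qNat q n) * q ^ (-(k : ℤ)) * x)

/-- The `q`-Szász operator `M_{n,q}(f;x) = ∑_{k=0}^∞ f([k]_q/[n]_q) s_{n,k}(q;x)`. -/
noncomputable def qSzasz (q : ℝ) (n : ℕ) (f : ℝ → ℝ) (x : ℝ) : ℝ :=
  ∑' k : ℕ, f (qNat q k / qNat q n) * qSzaszBasis q n k x

/-- The weight `w_0(x) = 1`, `w_p(x) = (1 + x^p)⁻¹` for `p ≥ 1`. -/
noncomputable def weight (p : ℕ) (x : ℝ) : ℝ := if p = 0 then 1 else (1 + x ^ p)⁻¹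

/-- The weighted sup-norm `‖f‖_p = sup_{x ≥ 0} w_p(x)|f(x)|`. -/
noncomputable def wnorm (p : ℕ) (f : ℝ → ℝ) : ℝ :=
  ⨆ x : Set.Ici (0 : ℝ), weight p x.1 * |f x.1|

/-- Membership in the space `C_p`: `f` is continuous on `[0,∞)` and `w_p f` is
uniformly continuous and bounded on `[0,∞)`. -/
def MemCp (p : ℕ) (f : ℝ → ℝ) : Prop :=
  ContinuousOn f (Set.Ici 0) ∧
  UniformContinuousOn (fun x => weight p x * f x) (Set.Ici 0) ∧
  ∃ M : ℝ, ∀ x ∈ Set.Ici (0 : ℝ), |weight p x * f x| ≤ M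

/-- The second difference `Δ_h² f(x) = f(x+2h) - 2f(x+h) + f(x)`. -/
noncomputable def delta2 (f : ℝ → ℝ) (h x : ℝ) : ℝ := f (x + 2 * h) - 2 * f (x + h) + f x

/-- The second modulus of smoothness `ω_p²(f;δ) = sup_{0<h≤δ} ‖Δ_h² f‖_p`. -/
noncomputable def omega2 (p : ℕ) (f : ℝ → ℝ) (δ : ℝ) : ℝ :=
  ⨆ h : {h : ℝ // 0 < h ∧ h ≤ δ}, wnorm p (fun x => delta2 f h.1 x)

/-- The (first) modulus of continuity on `[0,∞)`:
`ω(g;δ) = sup {|g(s)-g(t)| : s,t ≥ 0, |s-t| ≤ δ}`. -/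
noncomputable def omega1 (g : ℝ → ℝ) (δ : ℝ) : ℝ :=
  sSup {d : ℝ | ∃ s t : ℝ, 0 ≤ s ∧ 0 ≤ t ∧ |s - t| ≤ δ ∧ d = |g s - g t|}

/-- The `q`-derivative `(D_q g)(x) = (g(qx) - g(x))/((q-1)x)`. -/
noncomputable def qDeriv (q : ℝ) (g : ℝ → ℝ) (x : ℝ) : ℝ := (g (q * x) - g x) / ((q - 1) * x)

/-- The `q`-Stirling-type numbers: `S_q(0,0)=1`, `S_q(m,0)=0` for `m>0`,
`S_q(m,j)=0` for `m<j`, and `S_q(m+1,j)=[j]_q S_q(m,j) + S_q(m,j-1)`. -/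
noncomputable def qStirling (q : ℝ) : ℕ → ℕ → ℝ
  | 0, 0 => 1
  | 0, _ + 1 => 0
  | _ + 1, 0 => 0
  | m + 1, j + 1 => qNat q (j + 1) * qStirling q m (j + 1) + qStirling q m j

section Helpers
variable {q : ℝ}


lemma qNat_nonneg (hq : 1 < q) (k : ℕ) : 0 ≤ qNat q k := by
  unfold qNat
  apply div_nonneg _ (by linarith)
  have : (1:ℝ) ≤ q ^ k := one_le_pow₀ (by linarith)
  linarith

lemma one_le_qNat (hq : 1 < q) {k : ℕ} (hk : 1 ≤ k) : 1 ≤ qNat q k := by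
  unfold qNat
  rw [le_div_iff₀ (by linarith)]
  have h : q ^ 1 ≤ q ^ k := pow_le_pow_right₀ (by linarith) hk
  simp only [pow_one] at h
  linarith

lemma qNat_pos (hq : 1 < q) {k : ℕ} (hk : 1 ≤ k) : 0 < qNat q k :=
  lt_of_lt_of_le one_pos (one_le_qNat hq hk)

lemma qNat_mul (hq : 1 < q) (k : ℕ) : (q - 1) * qNat q k = q ^ k - 1 := by
  unfold qNat
  rw [← mul_div_assoc, mul_div_cancel_left₀ _ (by linarith : q - 1 ≠ 0)]

lemma qNat_succ (hq : 1 < q) (k : ℕ) : qNat q (k + 1) = q * qNat q k + 1 := by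
  have h : q - 1 ≠ 0 := by linarith
  unfold qNat
  field_simp
  ring

lemma nat_le_qNat (hq : 1 < q) (k : ℕ) : (k : ℝ) ≤ qNat q k := by
  unfold qNat
  rw [le_div_iff₀ (by linarith)]
  have h := one_add_mul_le_pow (by linarith : (-2:ℝ) ≤ q - 1) k
  have h2 : (1:ℝ) + k * (q - 1) ≤ q ^ k := by
    have : (1:ℝ) + (q - 1) = q := by ring
    rwa [this] at h
  linarith

lemma qFactorial_pos (hq : 1 < q) (k : ℕ) : 0 < qFactorial q k := by
  induction k with
  | zero => norm_num [qFactorial]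
  | succ i ih =>
    have : qFactorial q (i + 1) = qFactorial q i * qNat q (i + 1) := rfl
    rw [this]
    exact mul_pos ih (qNat_pos hq (Nat.succ_le_succ i.zero_le))

lemma summable_qExp (hq : 1 < q) (z : ℝ) :
    Summable (fun i : ℕ => z ^ i / qFactorial q i) := by
  obtain ⟨N, hN⟩ := exists_nat_ge (2 * |z|)
  apply summable_of_ratio_norm_eventually_le (r := 1/2) (by norm_num)
  filter_upwards [Filter.eventually_ge_atTop N] with i hi
  have hfi : 0 < qFactorial q i := qFactorial_pos hq i
  have hqi : 0 < qNat q (i + 1) := qNat_pos hq (Nat.succ_le_succ i.zero_le)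
  have hz : 2 * |z| ≤ qNat q (i + 1) := by
    calc 2 * |z| ≤ (N : ℝ) := hN
      _ ≤ (i : ℝ) := by exact_mod_cast hi
      _ ≤ ((i + 1 : ℕ) : ℝ) := by push_cast; linarith
      _ ≤ qNat q (i + 1) := nat_le_qNat hq (i + 1)
  have hfe : qFactorial q (i + 1) = qFactorial q i * qNat q (i + 1) := rfl
  simp only [Real.norm_eq_abs, abs_div, abs_pow]
  rw [abs_of_pos (qFactorial_pos hq (i + 1)), abs_of_pos hfi, hfe, pow_succ]
  have key : |z| / qNat q (i + 1) ≤ 1 / 2 := by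
    rw [div_le_iff₀ hqi]; linarith
  calc |z| ^ i * |z| / (qFactorial q i * qNat q (i + 1))
      = (|z| ^ i / qFactorial q i) * (|z| / qNat q (i + 1)) := by
        rw [div_mul_div_comm]
    _ ≤ (|z| ^ i / qFactorial q i) * (1 / 2) := by
        apply mul_le_mul_of_nonneg_left key (by positivity)
    _ = 1 / 2 * (|z| ^ i / qFactorial q i) := by ring

lemma abs_qExp_le (hq : 1 < q) {w W : ℝ} (h : |w| ≤ W) : |qExp q w| ≤ qExp q W := by
  unfold qExp
  have habs : ∀ i : ℕ, |w ^ i / qFactorial q i| = |w| ^ i / qFactorial q i := by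
    intro i
    rw [abs_div, abs_pow, abs_of_pos (qFactorial_pos hq i)]
  have h1 : Summable (fun i : ℕ => |w ^ i / qFactorial q i|) := by
    simp only [habs]; exact summable_qExp hq |w|
  have hb : Summable (fun i : ℕ => ‖w ^ i / qFactorial q i‖) := by
    simpa only [Real.norm_eq_abs] using h1
  have hstep := norm_tsum_le_tsum_norm hb
  simp only [Real.norm_eq_abs] at hstep
  refine hstep.trans ?_
  apply Summable.tsum_le_tsum _ h1 (summable_qExp hq W)
  intro i
  rw [habs i]
  have hW : 0 ≤ W := (abs_nonneg w).trans h
  exact div_le_div₀ (by positivity) (pow_le_pow_left₀ (abs_nonneg w) h i)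
    (qFactorial_pos hq i) le_rfl

lemma qExp_q_mul (hq : 1 < q) (z : ℝ) :
    qExp q (q * z) = (1 + (q - 1) * z) * qExp q z := by
  have hf := summable_qExp hq (q * z)
  have hg := summable_qExp hq z
  have key : ∑' i : ℕ, ((q * z) ^ i / qFactorial q i - z ^ i / qFactorial q i)
      = (q - 1) * z * qExp q z := by
    rw [Summable.tsum_eq_zero_add (hf.sub hg)]
    have h0 : (q * z) ^ 0 / qFactorial q 0 - z ^ 0 / qFactorial q 0 = 0 := by norm_num
    rw [h0, zero_add]
    have hterm : ∀ i : ℕ, (q * z) ^ (i + 1) / qFactorial q (i + 1) -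
        z ^ (i + 1) / qFactorial q (i + 1)
        = (q - 1) * z * (z ^ i / qFactorial q i) := by
      intro i
      have hfe : qFactorial q (i + 1) = qFactorial q i * qNat q (i + 1) := rfl
      have h2 : (q - 1) * qNat q (i + 1) = q ^ (i + 1) - 1 := qNat_mul hq (i + 1)
      have hfi := (qFactorial_pos hq i).ne'
      have hqi := (qNat_pos hq (Nat.succ_le_succ i.zero_le)).ne'
      rw [hfe, mul_pow]
      field_simp
      linear_combination (-(z ^ (i + 1))) * h2
    rw [tsum_congr hterm, tsum_mul_left]
    rfl
  have h3 : qExp q (q * z) - qExp q z = (q - 1) * z * qExp q z := by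
    unfold qExp
    rw [← Summable.tsum_sub hf hg]
    exact key
  linear_combination h3

lemma qSzaszBasis_q_mul (hq : 1 < q) (n k : ℕ) (x : ℝ) :
    qSzaszBasis q n k (q * x) =
      (q ^ k - (q - 1) * qNat q n * x) * qSzaszBasis q n k x := by
  have hq0 : (q : ℝ) ≠ 0 := by positivity
  unfold qSzaszBasis
  have harg : -(qNat q n) * q ^ (-(k : ℤ)) * (q * x)
      = q * (-(qNat q n) * q ^ (-(k : ℤ)) * x) := by ring
  rw [harg, qExp_q_mul hq]
  have hz : (q : ℝ) ^ (-(k : ℤ)) = (q ^ k)⁻¹ := by rw [zpow_neg, zpow_natCast]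
  rw [hz, mul_pow]
  have hqk : (q : ℝ) ^ k ≠ 0 := by positivity
  linear_combination (-(q ^ (k * (k - 1) / 2) : ℝ)⁻¹ * qNat q n ^ k * x ^ k / qFactorial q k *
    qExp q (-(qNat q n) * (q ^ k)⁻¹ * x) * (q - 1) * qNat q n * x) * (mul_inv_cancel₀ hqk)

lemma summable_aux (hq : 1 < q) (j : ℕ) {c : ℝ} (hc : 0 ≤ c) :
    Summable (fun k : ℕ =>
      qNat q k ^ j * ((q ^ (k * (k - 1) / 2))⁻¹ * c ^ k / qFactorial q k)) := by
  have hq0 : (0:ℝ) < q := by linarith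
  obtain ⟨N, hN⟩ := pow_unbounded_of_one_lt (2 * (1 + q) ^ j * c) hq
  apply summable_of_ratio_norm_eventually_le (r := 1/2) (by norm_num)
  filter_upwards [Filter.eventually_ge_atTop (max N 1)] with k hk
  have hk1 : 1 ≤ k := le_trans (le_max_right N 1) hk
  have hkN : N ≤ k := le_trans (le_max_left N 1) hk
  have hqk : 2 * (1 + q) ^ j * c ≤ q ^ k :=
    le_trans hN.le (pow_le_pow_right₀ hq.le hkN)
  have hF : 0 < qFactorial q k := qFactorial_pos hq k
  have hF1 : 0 < qFactorial q (k + 1) := qFactorial_pos hq (k + 1)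
  have hk0 : 0 ≤ qNat q k := qNat_nonneg hq k
  have hks : 0 < qNat q (k + 1) := qNat_pos hq (Nat.succ_le_succ k.zero_le)
  have hks1 : 1 ≤ qNat q (k + 1) := one_le_qNat hq (Nat.succ_le_succ k.zero_le)
  have hnn : ∀ i : ℕ, 0 ≤ qNat q i ^ j * ((q ^ (i * (i - 1) / 2))⁻¹ * c ^ i / qFactorial q i) := by
    intro i
    have := qFactorial_pos hq i
    have := qNat_nonneg hq i
    positivity
  rw [Real.norm_of_nonneg (hnn (k + 1)), Real.norm_of_nonneg (hnn k)]
  have hT : (k + 1) * ((k + 1) - 1) / 2 = k * (k - 1) / 2 + k := Nat.triangle_succ k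
  have hfe : qFactorial q (k + 1) = qFactorial q k * qNat q (k + 1) := rfl
  rw [hT, pow_add, hfe, pow_succ]
  have e1 : qNat q (k + 1) ≤ (1 + q) * qNat q k := by
    rw [qNat_succ hq]
    have := one_le_qNat hq hk1
    linarith [mul_le_mul_of_nonneg_left (one_le_qNat hq hk1) hq0.le]
  have hp : (0:ℝ) < (1 + q) ^ j := by positivity
  have hcq : c / q ^ k ≤ 1 / (2 * (1 + q) ^ j) := by
    rw [div_le_div_iff₀ (by positivity) (by positivity)]
    calc c * (2 * (1 + q) ^ j) = 2 * (1 + q) ^ j * c := by ring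
      _ ≤ q ^ k := hqk
      _ = 1 * q ^ k := by ring
  have h1' : qNat q (k + 1) ^ j * (c / (q ^ k * qNat q (k + 1))) ≤ 1 / 2 * qNat q k ^ j := by
    calc qNat q (k + 1) ^ j * (c / (q ^ k * qNat q (k + 1)))
        ≤ ((1 + q) * qNat q k) ^ j * (c / (q ^ k * 1)) := by gcongr
      _ = (1 + q) ^ j * qNat q k ^ j * (c / q ^ k) := by rw [mul_pow]; ring
      _ ≤ (1 + q) ^ j * qNat q k ^ j * (1 / (2 * (1 + q) ^ j)) := by
          apply mul_le_mul_of_nonneg_left hcq (by positivity)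
      _ = 1 / 2 * qNat q k ^ j := by field_simp
  have hbase : 0 ≤ (q ^ (k * (k - 1) / 2))⁻¹ * c ^ k / qFactorial q k := by positivity
  calc qNat q (k + 1) ^ j * ((q ^ (k * (k - 1) / 2) * q ^ k)⁻¹ * (c ^ k * c) /
          (qFactorial q k * qNat q (k + 1)))
      = (qNat q (k + 1) ^ j * (c / (q ^ k * qNat q (k + 1)))) *
          ((q ^ (k * (k - 1) / 2))⁻¹ * c ^ k / qFactorial q k) := by
        field_simp
    _ ≤ (1 / 2 * qNat q k ^ j) * ((q ^ (k * (k - 1) / 2))⁻¹ * c ^ k / qFactorial q k) :=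
        mul_le_mul_of_nonneg_right h1' hbase
    _ = 1 / 2 * (qNat q k ^ j * ((q ^ (k * (k - 1) / 2))⁻¹ * c ^ k / qFactorial q k)) := by
        ring

lemma summable_moment (hq : 1 < q) {n : ℕ} (hn : 1 ≤ n) (j : ℕ) {x : ℝ} (hx : 0 ≤ x) :
    Summable (fun k : ℕ => qNat q k ^ j * qSzaszBasis q n k x) := by
  have hq0 : (0:ℝ) < q := by linarith
  have hNq : 0 < qNat q n := qNat_pos hq hn
  set C := qExp q (qNat q n * x) with hC
  have hCk : ∀ k : ℕ, |qExp q (-(qNat q n) * q ^ (-(k : ℤ)) * x)| ≤ C := by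
    intro k
    apply abs_qExp_le hq
    have hzp : (0:ℝ) < q ^ (-(k : ℤ)) := zpow_pos hq0 _
    rw [abs_mul, abs_mul, abs_neg, abs_of_pos hNq, abs_of_nonneg hx, abs_of_pos hzp]
    have hle1 : (q : ℝ) ^ (-(k : ℤ)) ≤ 1 := by
      rw [zpow_neg, zpow_natCast]
      exact inv_le_one_of_one_le₀ (one_le_pow₀ hq.le)
    calc qNat q n * q ^ (-(k : ℤ)) * x ≤ qNat q n * 1 * x := by gcongr
      _ = qNat q n * x := by ring
  have hCnn : 0 ≤ C := le_trans (abs_nonneg _) (hCk 0)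
  rw [← summable_abs_iff]
  apply Summable.of_nonneg_of_le (fun k => abs_nonneg _) ?_
    ((summable_aux hq j (mul_nonneg hNq.le hx)).mul_left C)
  intro k
  have hF : 0 < qFactorial q k := qFactorial_pos hq k
  have hknn : 0 ≤ qNat q k := qNat_nonneg hq k
  unfold qSzaszBasis
  rw [abs_mul, abs_mul]
  rw [abs_of_nonneg (by positivity : (0:ℝ) ≤ qNat q k ^ j),
    abs_of_nonneg (by positivity :
      (0:ℝ) ≤ (q ^ (k * (k - 1) / 2))⁻¹ * (qNat q n ^ k * x ^ k / qFactorial q k))]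
  calc qNat q k ^ j * ((q ^ (k * (k - 1) / 2))⁻¹ * (qNat q n ^ k * x ^ k / qFactorial q k) *
          |qExp q (-(qNat q n) * q ^ (-(k : ℤ)) * x)|)
      ≤ qNat q k ^ j * ((q ^ (k * (k - 1) / 2))⁻¹ * (qNat q n ^ k * x ^ k / qFactorial q k) * C) := by
        gcongr
        exact hCk k
    _ = C * (qNat q k ^ j * ((q ^ (k * (k - 1) / 2))⁻¹ * (qNat q n * x) ^ k / qFactorial q k)) := by
        rw [mul_pow]
        ring

end Helpers

/-- `M_{n,q}(t^{m+1};x) = (x/[n]_q) D_q M_{n,q}(t^m;x) + x M_{n,q}(t^m;x)`. -/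
theorem qSzasz_moment_qDeriv_recurrence (q : ℝ) (hq : 1 < q) (n : ℕ) (hn : 1 ≤ n)
    (m : ℕ) (x : ℝ) (hx : 0 < x) :
    qSzasz q n (fun t => t ^ (m + 1)) x =
      x / qNat q n * qDeriv q (fun y => qSzasz q n (fun t => t ^ m) y) x +
        x * qSzasz q n (fun t => t ^ m) x := by
  have hNq : 0 < qNat q n := qNat_pos hq hn
  have hNq' : qNat q n ≠ 0 := hNq.ne'
  set s : ℕ → ℝ := fun k => qSzaszBasis q n k x with hs
  set a : ℕ → ℝ := fun k => (qNat q k / qNat q n) ^ m with ha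
  have hv : Summable (fun k => a k * s k) := by
    have h := (summable_moment hq hn m hx.le).mul_left ((qNat q n ^ m)⁻¹)
    refine h.congr fun k => ?_
    simp only [ha, hs, div_pow]
    ring
  have hu : Summable (fun k => (qNat q k / qNat q n) * (a k * s k)) := by
    have h := (summable_moment hq hn (m + 1) hx.le).mul_left ((qNat q n ^ (m + 1))⁻¹)
    refine h.congr fun k => ?_
    simp only [ha, hs, div_pow, pow_succ]
    field_simp
  set L : ℝ := ∑' k, (qNat q k / qNat q n) * (a k * s k) with hLdef
  set G : ℝ := ∑' k, a k * s k with hGdef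
  have hL : qSzasz q n (fun t => t ^ (m + 1)) x = L := by
    rw [hLdef]
    unfold qSzasz
    refine tsum_congr fun k => ?_
    simp only [ha, hs, pow_succ]
    ring
  have hG : qSzasz q n (fun t => t ^ m) x = G := by
    rw [hGdef]; unfold qSzasz; rfl
  have hGq : qSzasz q n (fun t => t ^ m) (q * x) =
      (q - 1) * qNat q n * L + (1 - (q - 1) * qNat q n * x) * G := by
    unfold qSzasz
    have hterm : ∀ k : ℕ, (qNat q k / qNat q n) ^ m * qSzaszBasis q n k (q * x) =
        ((q - 1) * qNat q n) * ((qNat q k / qNat q n) * (a k * s k)) +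
          (1 - (q - 1) * qNat q n * x) * (a k * s k) := by
      intro k
      rw [qSzaszBasis_q_mul hq]
      have hinv : qNat q n * (qNat q n)⁻¹ = 1 := mul_inv_cancel₀ hNq'
      have h2 : (q - 1) * qNat q k = q ^ k - 1 := qNat_mul hq k
      simp only [ha, hs]
      linear_combination (-((qNat q k / qNat q n) ^ m * qSzaszBasis q n k x)) * h2 +
        (-((qNat q k / qNat q n) ^ m * qSzaszBasis q n k x * (q - 1) * qNat q k)) * hinv
    rw [tsum_congr hterm, Summable.tsum_add (hu.mul_left _) (hv.mul_left _),
      tsum_mul_left, tsum_mul_left]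
  rw [hL, qDeriv]
  simp only [hGq, hG]
  have hq1 : q - 1 ≠ 0 := sub_ne_zero.mpr hq.ne'
  have hx' : x ≠ 0 := hx.ne'
  field_simp
  ring
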